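/- For every real number x, the formal power series identity A(t)·e^{xt} = ∑_{n=0}^∞ A_n^{(k)}(m,x)·t^n/n! holds in ℝ[[t]], where A(t) := ∑_{j=0}^∞ γ_j·((−1)^k m / k^k)^j · t^{kj}/j! and e^{xt} := ∑_{s=0}^∞ x^s t^s/s!. Equivalently, for every n ∈ ℕ, the coefficient of t^n in the product series A(t)·e^{xt} equals A_n^{(k)}(m,x)/n!. -/

import Mathlib

open Finset

/-- Rising factorial (Pochhammer symbol) `x^(n) = x(x+1)⋯(x+n-1)`. -/
noncomputable def risingFact (x : ℝ) (n : ℕ) : ℝ := (ascPochhammer ℝ n).eval x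

/-- `γ_i = (∏_r a_r^{(i)}) / (∏_s b_s^{(i)})`. -/
noncomputable def ghGamma {p q : ℕ} (a : Fin p → ℝ) (b : Fin q → ℝ) (i : ℕ) : ℝ :=
  (∏ r, risingFact (a r) i) / (∏ s, risingFact (b s) i)

/-- The generalized hypergeometric Appell polynomial `A_n^{(k)}(m,x)` (as a function of `x`). -/
noncomputable def ghAppell {p q : ℕ} (a : Fin p → ℝ) (b : Fin q → ℝ)
    (k : ℕ) (m : ℝ) (n : ℕ) (x : ℝ) : ℝ :=
  ∑ i ∈ Finset.range (n / k + 1),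
    ((n.factorial : ℝ) / (i.factorial * (n - k * i).factorial)) * ghGamma a b i *
      ((-1) ^ (k * i) * m ^ i / (k : ℝ) ^ (k * i)) * x ^ (n - k * i)

/-- for every real `x`, the product of the formal power series
`A(t) = ∑_j γ_j ((-1)^k m / k^k)^j t^{kj}/j!` and `e^{xt} = ∑_s x^s t^s/s!` has,
for every `n`, `n`-th coefficient equal to `A_n^{(k)}(m,x)/n!`. -/
theorem ghAppell_generating_function {p q : ℕ} (a : Fin p → ℝ) (b : Fin q → ℝ)
    (hb : ∀ s : Fin q, ∀ j : ℕ, b s ≠ -(j : ℝ))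
    (k : ℕ) (hk : 1 ≤ k) (m : ℝ) (x : ℝ) (n : ℕ) :
    PowerSeries.coeff n
      ((PowerSeries.mk fun j : ℕ =>
          if k ∣ j then
            ghGamma a b (j / k) * (((-1) ^ k * m / (k : ℝ) ^ k) ^ (j / k)) / (j / k).factorial
          else 0) *
        (PowerSeries.mk fun s : ℕ => x ^ s / s.factorial)) =
      ghAppell a b k m n x / n.factorial := by
  classical
  have hk0 : (k : ℝ) ≠ 0 := Nat.cast_ne_zero.mpr (by omega)
  rw [PowerSeries.coeff_mul, Finset.Nat.sum_antidiagonal_eq_sum_range_succ_mk]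
  simp only [PowerSeries.coeff_mk, ite_mul, zero_mul]
  rw [← Finset.sum_filter, ghAppell, Finset.sum_div]
  refine (Finset.sum_nbij' (fun i => k * i) (fun j => j / k) ?_ ?_ ?_ ?_ ?_).symm
  · intro i hi
    simp only [Finset.mem_range] at hi
    simp only [Finset.mem_filter, Finset.mem_range]
    refine ⟨Nat.lt_succ_of_le ?_, Dvd.intro i rfl⟩
    calc k * i ≤ k * (n / k) := Nat.mul_le_mul_left k (Nat.lt_succ_iff.mp hi)
      _ ≤ n := Nat.mul_div_le n k
  · intro j hj
    simp only [Finset.mem_filter, Finset.mem_range] at hj ⊢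
    exact Nat.lt_succ_of_le (Nat.div_le_div_right (Nat.lt_succ_iff.mp hj.1))
  · intro i _
    exact Nat.mul_div_cancel_left i (by omega)
  · intro j hj
    simp only [Finset.mem_filter] at hj
    exact Nat.mul_div_cancel' hj.2
  · intro i hi
    rw [Nat.mul_div_cancel_left i (by omega : 0 < k)]
    have h1 : (((-1 : ℝ)) ^ k * m / (k : ℝ) ^ k) ^ i
        = (-1 : ℝ) ^ (k * i) * m ^ i / (k : ℝ) ^ (k * i) := by
      rw [div_pow, mul_pow, ← pow_mul, ← pow_mul]
    rw [h1]
    have hnf : (n.factorial : ℝ) ≠ 0 := Nat.cast_ne_zero.mpr n.factorial_ne_zero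
    have hif : (i.factorial : ℝ) ≠ 0 := Nat.cast_ne_zero.mpr i.factorial_ne_zero
    have hjf : ((n - k * i).factorial : ℝ) ≠ 0 := Nat.cast_ne_zero.mpr (n - k * i).factorial_ne_zero
    field_simp
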